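/- arXiv:math/9909143 — 7 statements merged into one kernel-verified Lean document; each statement's English description precedes it below -/
import Mathlib

section
/- Let G be a topological group, E a noncompact locally profinite group, and Γ a cocompact lattice in G × E whose projection pr_G : Γ → G is injective. Then for every compact open subgroup S of E the double coset space S\E/Γ_E is finite, i.e. E is the union of finitely many sets of the form S e Γ_E. -/
noncomputable section

/-- A locally profinite group: a locally compact Hausdorff totally disconnected
topological group. -/
def IsLocallyProfinite (E : Type*) [TopologicalSpace E] : Prop :=
  LocallyCompactSpace E ∧ T2Space E ∧ TotallyDisconnectedSpace E

/-- If `Γ` is a cocompact lattice in `G × E` with injective projection to `G`,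
where `G` is a topological group and `E` a noncompact locally profinite group, then for every
compact open subgroup `S` of `E` the double coset space `S\E/Γ_E` is finite: `E` is the union of
finitely many sets `S e Γ_E`. -/
theorem double_coset_space_finite {G E : Type*}
    [Group G] [TopologicalSpace G] [IsTopologicalGroup G]
    [Group E] [TopologicalSpace E] [IsTopologicalGroup E]
    (hE : IsLocallyProfinite E) (hnc : NoncompactSpace E)
    (Γ : Subgroup (G × E)) (hdisc : DiscreteTopology Γ)
    (hcpt : CompactSpace ((G × E) ⧸ Γ))
    (hinj : Set.InjOn Prod.fst (Γ : Set (G × E)))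
    (S : Subgroup E) (hSc : IsCompact (S : Set E)) (hSo : IsOpen (S : Set E)) :
    ∃ T : Finset E, ∀ e : E, ∃ t ∈ T, ∃ s ∈ S, ∃ γ ∈ Γ, e = s * t * (γ : G × E).2 := by
  classical
  set π : (G × E) → (G × E) ⧸ Γ := QuotientGroup.mk with hπ
  set V : E → Set ((G × E) ⧸ Γ) :=
    fun t => π '' (Set.univ ×ˢ ((fun e => e * t⁻¹) ⁻¹' (S : Set E))) with hV
  have hVopen : ∀ t, IsOpen (V t) := by
    intro t
    apply QuotientGroup.isOpenMap_coe
    exact isOpen_univ.prod (hSo.preimage (continuous_mul_right t⁻¹))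
  have hcover : (Set.univ : Set ((G × E) ⧸ Γ)) ⊆ ⋃ t, V t := by
    intro q _
    obtain ⟨⟨g, e⟩, rfl⟩ := QuotientGroup.mk_surjective q
    refine Set.mem_iUnion.2 ⟨e, ⟨(g, e), ⟨Set.mem_univ _, ?_⟩, rfl⟩⟩
    simp [S.one_mem]
  obtain ⟨T, hT⟩ := isCompact_univ.elim_finite_subcover V hVopen hcover
  refine ⟨T, fun e => ?_⟩
  have := hT (Set.mem_univ (π (1, e)))
  rw [Set.mem_iUnion₂] at this
  obtain ⟨t, htT, ⟨x, ⟨_, hxS⟩, hx⟩⟩ := this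
  have hγ : x⁻¹ * (1, e) ∈ Γ := by
    rw [← QuotientGroup.eq]
    exact hx
  refine ⟨t, htT, x.2 * t⁻¹, hxS, x⁻¹ * (1, e), hγ, ?_⟩
  simp [mul_assoc]
end
end

section
/- Let G be a topological group, E a noncompact locally profinite group, and Γ a cocompact lattice in G × E whose projection pr_G : Γ → G is injective. Then for every compact open subgroup S of E the index [Γ_G : Γ_S] is infinite, where Γ_S := pr_G(Γ ∩ (G × S)). -/
noncomputable section

open Pointwise

/-- If `Γ` is a cocompact lattice in `G × E` with injective projection to `G`,
where `G` is a topological group and `E` a noncompact locally profinite group, then for every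
compact open subgroup `S` of `E` the index `[Γ_G : Γ_S]` is infinite, where
`Γ_S = pr_G(Γ ∩ (G × S))`. -/
theorem index_of_GammaS_in_GammaG_infinite {G E : Type*}
    [Group G] [TopologicalSpace G] [IsTopologicalGroup G]
    [Group E] [TopologicalSpace E] [IsTopologicalGroup E]
    (hE : IsLocallyProfinite E) (hnc : NoncompactSpace E)
    (Γ : Subgroup (G × E)) (hdisc : DiscreteTopology Γ)
    (hcpt : CompactSpace ((G × E) ⧸ Γ))
    (hinj : Set.InjOn Prod.fst (Γ : Set (G × E)))
    (S : Subgroup E) (hSc : IsCompact (S : Set E)) (hSo : IsOpen (S : Set E)) :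
    Infinite
      ((Subgroup.map (MonoidHom.fst G E) Γ) ⧸
        ((Subgroup.map (MonoidHom.fst G E) (Γ ⊓ Subgroup.prod ⊤ S)).subgroupOf
          (Subgroup.map (MonoidHom.fst G E) Γ))) := by
  obtain ⟨-, hT2, -⟩ := hE
  haveI := hT2
  by_contra hfin
  rw [not_infinite_iff_finite] at hfin
  set ΓG := Subgroup.map (MonoidHom.fst G E) Γ with hΓGdef
  set ΓS := Subgroup.map (MonoidHom.fst G E) (Γ ⊓ Subgroup.prod ⊤ S) with hΓSdef
  set ΓE := Subgroup.map (MonoidHom.snd G E) Γ with hΓEdef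
  -- choose representatives in Γ for each coset
  have hrep : ∀ q : ΓG ⧸ ΓS.subgroupOf ΓG,
      ∃ γ : G × E, γ ∈ Γ ∧ γ.1 = ((Quotient.out q : ΓG) : G) := by
    intro q
    obtain ⟨γ, hγ, h⟩ := Subgroup.mem_map.mp (Quotient.out q : ΓG).2
    exact ⟨γ, hγ, h⟩
  choose γq hγqΓ hγq1 using hrep
  -- the compact closed covering set
  set C : Set E := ⋃ q : ΓG ⧸ ΓS.subgroupOf ΓG, (γq q).2 • (S : Set E) with hCdef
  have hCcpt : IsCompact C := isCompact_iUnion fun q => hSc.smul _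
  have hCcl : IsClosed C := isClosed_iUnion_of_finite fun q => hSc.isClosed.smul _
  -- Γ_E is contained in C
  have hsub : (ΓE : Set E) ⊆ C := by
    rintro e he
    obtain ⟨γ, hγ, rfl⟩ := Subgroup.mem_map.mp he
    have hx : γ.1 ∈ ΓG := Subgroup.mem_map.mpr ⟨γ, hγ, rfl⟩
    set x : ΓG := ⟨γ.1, hx⟩ with hxdef
    set q : ΓG ⧸ ΓS.subgroupOf ΓG := QuotientGroup.mk x with hqdef
    have hq : (Quotient.out q)⁻¹ * x ∈ ΓS.subgroupOf ΓG := by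
      rw [← QuotientGroup.eq]
      exact QuotientGroup.out_eq' q
    have hq' : ((Quotient.out q : ΓG) : G)⁻¹ * γ.1 ∈ ΓS := by
      have := Subgroup.mem_subgroupOf.mp hq
      simpa using this
    obtain ⟨δ, hδ, hδ1⟩ := Subgroup.mem_map.mp hq'
    have hδΓ : δ ∈ Γ := hδ.1
    have hδS : δ.2 ∈ S := hδ.2.2
    have hη : (γq q)⁻¹ * γ ∈ Γ := Γ.mul_mem (Γ.inv_mem (hγqΓ q)) hγ
    have h1 : δ.1 = ((γq q)⁻¹ * γ).1 := by
      rw [Prod.fst_mul, Prod.fst_inv, hγq1]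
      exact hδ1
    have hδη : δ = (γq q)⁻¹ * γ := hinj hδΓ hη h1
    have h2 : γ.2 = (γq q).2 * δ.2 := by
      rw [hδη]; simp
    refine Set.mem_iUnion.mpr ⟨q, ?_⟩
    exact ⟨δ.2, hδS, by simp [smul_eq_mul, h2.symm]⟩
  -- the closure H of Γ_E is a compact subgroup
  set H := ΓE.topologicalClosure with hHdef
  have hHsub : (H : Set E) ⊆ C := closure_minimal hsub hCcl
  have hHcpt : IsCompact (H : Set E) :=
    hCcpt.of_isClosed_subset (Subgroup.isClosed_topologicalClosure ΓE) hHsub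
  -- E ⧸ H is compact, as a continuous image of (G × E) ⧸ Γ
  have hrel : ∀ a b : G × E, QuotientGroup.leftRel Γ a b →
      (QuotientGroup.mk a.2 : E ⧸ H) = QuotientGroup.mk b.2 := by
    intro a b hab
    rw [QuotientGroup.leftRel_apply] at hab
    refine QuotientGroup.eq.mpr ?_
    exact ΓE.le_topologicalClosure ⟨a⁻¹ * b, hab, rfl⟩
  haveI hQcpt : CompactSpace (E ⧸ H) := by
    refine ⟨?_⟩
    have hun : (Set.univ : Set (E ⧸ H)) =
        (fun x : (G × E) ⧸ Γ =>
          Quotient.liftOn' x (fun y => (QuotientGroup.mk y.2 : E ⧸ H)) hrel) '' Set.univ := by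
      ext y
      simp only [Set.image_univ, Set.mem_univ, true_iff, Set.mem_range]
      obtain ⟨e, rfl⟩ := QuotientGroup.mk_surjective y
      exact ⟨QuotientGroup.mk ((1 : G), e), rfl⟩
    rw [hun]
    exact isCompact_univ.image
      ((QuotientGroup.continuous_mk.comp continuous_snd).quotient_liftOn' hrel)
  -- the projection E → E ⧸ H is proper
  have hproper : IsProperMap (QuotientGroup.mk : E → E ⧸ H) := by
    rw [isProperMap_iff_isClosedMap_and_compact_fibers]
    refine ⟨QuotientGroup.continuous_mk, QuotientGroup.isClosedMap_coe hHcpt, ?_⟩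
    intro y
    obtain ⟨e, rfl⟩ := QuotientGroup.mk_surjective y
    have hfib : (QuotientGroup.mk : E → E ⧸ H) ⁻¹' {QuotientGroup.mk e}
        = e • (H : Set E) := by
      ext x
      simp only [Set.mem_preimage, Set.mem_singleton_iff]
      rw [eq_comm, QuotientGroup.eq]
      constructor
      · intro hx
        exact ⟨e⁻¹ * x, hx, by simp [smul_eq_mul]⟩
      · rintro ⟨z, hz, rfl⟩
        simpa [smul_eq_mul] using hz
    rw [hfib]
    exact hHcpt.smul e
  -- hence E is compact, contradiction
  have : IsCompact (Set.univ : Set E) := by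
    simpa using hproper.isCompact_preimage isCompact_univ
  exact NoncompactSpace.noncompact_univ this
end
end

section
/- Let G be a topological group, E a noncompact locally profinite group, and Γ a cocompact lattice in G × E whose projection pr_G : Γ → G is injective. Then for every compact open subgroup S of E, Γ_G is contained in the commensurator of Γ_S in G: for every γ ∈ Γ_G the subgroup γ Γ_S γ⁻¹ ∩ Γ_S has finite index in both Γ_S and γ Γ_S γ⁻¹. -/
noncomputable section

open Subgroup

/-- Core finiteness lemma: if `S` is compact and `T` is open, then
`pr_G(Γ ∩ (G × T)) ∩ pr_G(Γ ∩ (G × S))` has finite index in `pr_G(Γ ∩ (G × S))`. -/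
private lemma core_lemma {G E : Type*}
    [Group G] [Group E] [TopologicalSpace E] [IsTopologicalGroup E]
    (Γ : Subgroup (G × E))
    (hinj : Set.InjOn Prod.fst (Γ : Set (G × E)))
    (S T : Subgroup E) (hSc : IsCompact (S : Set E)) (hTo : IsOpen (T : Set E)) :
    ((Subgroup.map (MonoidHom.fst G E) (Γ ⊓ Subgroup.prod ⊤ T) ⊓
      Subgroup.map (MonoidHom.fst G E) (Γ ⊓ Subgroup.prod ⊤ S)).subgroupOf
        (Subgroup.map (MonoidHom.fst G E) (Γ ⊓ Subgroup.prod ⊤ S))).FiniteIndex := by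
  set f := MonoidHom.fst G E
  set ΔT := Γ ⊓ Subgroup.prod ⊤ T with hΔT
  set ΔS := Γ ⊓ Subgroup.prod ⊤ S with hΔS
  -- images of intersections
  have hmapinf : Subgroup.map f ΔT ⊓ Subgroup.map f ΔS = Subgroup.map f (ΔT ⊓ ΔS) := by
    ext x
    constructor
    · rintro ⟨⟨a, ha, hax⟩, ⟨b, hb, hbx⟩⟩
      have hab : a = b := hinj ha.1 hb.1 (hax.trans hbx.symm)
      exact ⟨a, ⟨ha, hab ▸ hb⟩, hax⟩
    · rintro ⟨a, ⟨h1, h2⟩, rfl⟩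
      exact ⟨⟨a, h1, rfl⟩, ⟨a, h2, rfl⟩⟩
  -- T has finite relative index in S
  have hTS : T.relIndex S ≠ 0 := by
    haveI : CompactSpace S := isCompact_iff_compactSpace.mp hSc
    have hopen : IsOpen ((T.subgroupOf S : Subgroup S) : Set S) := by
      have : ((T.subgroupOf S : Subgroup S) : Set S) = (Subtype.val) ⁻¹' (T : Set E) := rfl
      rw [this]
      exact hTo.preimage continuous_subtype_val
    haveI := Subgroup.quotient_finite_of_isOpen (T.subgroupOf S) hopen
    exact Subgroup.index_ne_zero_of_finite
  have hM : Subgroup.map (MonoidHom.snd G E) ΔS ≤ S := by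
    rintro x ⟨a, ha, rfl⟩
    exact ha.2.2
  have h2 : T.relIndex (Subgroup.map (MonoidHom.snd G E) ΔS) ≠ 0 :=
    fun h => hTS (Subgroup.relIndex_eq_zero_of_le_right hM h)
  have h3 : (Subgroup.comap (MonoidHom.snd G E) T).relIndex ΔS ≠ 0 := by
    rwa [Subgroup.relIndex_comap]
  have hinter : ΔT ⊓ ΔS = Subgroup.comap (MonoidHom.snd G E) T ⊓ ΔS := by
    rw [hΔT, hΔS, inf_comm Γ (Subgroup.prod ⊤ T), inf_assoc, ← inf_assoc Γ Γ, inf_idem,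
      Subgroup.top_prod]
  have h4 : (ΔT ⊓ ΔS).relIndex ΔS ≠ 0 := by
    rw [hinter, Subgroup.inf_relIndex_right]
    exact h3
  have h5 : (Subgroup.comap f (Subgroup.map f (ΔT ⊓ ΔS))).relIndex ΔS ≠ 0 := by
    intro h
    exact h4 (zero_dvd_iff.mp
      (h ▸ Subgroup.relIndex_dvd_of_le_left ΔS (Subgroup.le_comap_map f (ΔT ⊓ ΔS))))
  rw [Subgroup.relIndex_comap] at h5
  exact ⟨by rw [hmapinf]; exact h5⟩

/-- If `Γ` is a cocompact lattice in `G × E` with injective projection to `G`,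
where `G` is a topological group and `E` a noncompact locally profinite group, then for every
compact open subgroup `S` of `E`, `Γ_G` is contained in the commensurator of
`Γ_S = pr_G(Γ ∩ (G × S))` in `G`: for every `γ ∈ Γ_G` the subgroup `γ Γ_S γ⁻¹ ∩ Γ_S`
has finite index in both `Γ_S` and `γ Γ_S γ⁻¹`. -/
theorem GammaG_commensurates_GammaS {G E : Type*}
    [Group G] [TopologicalSpace G] [IsTopologicalGroup G]
    [Group E] [TopologicalSpace E] [IsTopologicalGroup E]
    (hE : IsLocallyProfinite E) (hnc : NoncompactSpace E)
    (Γ : Subgroup (G × E)) (hdisc : DiscreteTopology Γ)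
    (hcpt : CompactSpace ((G × E) ⧸ Γ))
    (hinj : Set.InjOn Prod.fst (Γ : Set (G × E)))
    (S : Subgroup E) (hSc : IsCompact (S : Set E)) (hSo : IsOpen (S : Set E)) :
    ∀ g ∈ Subgroup.map (MonoidHom.fst G E) Γ,
      (((Subgroup.map (MulAut.conj g).toMonoidHom
            (Subgroup.map (MonoidHom.fst G E) (Γ ⊓ Subgroup.prod ⊤ S))) ⊓
          (Subgroup.map (MonoidHom.fst G E) (Γ ⊓ Subgroup.prod ⊤ S))).subgroupOf
            (Subgroup.map (MonoidHom.fst G E) (Γ ⊓ Subgroup.prod ⊤ S))).FiniteIndex ∧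
      (((Subgroup.map (MulAut.conj g).toMonoidHom
            (Subgroup.map (MonoidHom.fst G E) (Γ ⊓ Subgroup.prod ⊤ S))) ⊓
          (Subgroup.map (MonoidHom.fst G E) (Γ ⊓ Subgroup.prod ⊤ S))).subgroupOf
            (Subgroup.map (MulAut.conj g).toMonoidHom
              (Subgroup.map (MonoidHom.fst G E) (Γ ⊓ Subgroup.prod ⊤ S)))).FiniteIndex := by
  rintro g ⟨p, hp, rfl⟩
  set f := MonoidHom.fst G E
  set T : Subgroup E := Subgroup.map (MulAut.conj p.2).toMonoidHom S with hT
  -- T is compact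
  have hTset : (T : Set E) = (fun x => p.2 * x * p.2⁻¹) '' (S : Set E) := by
    rw [hT, Subgroup.coe_map]
    rfl
  have hTc : IsCompact (T : Set E) := by
    rw [hTset]
    exact hSc.image (by continuity)
  -- T is open
  have hTo : IsOpen (T : Set E) := by
    have heq : (T : Set E) =
        ((Homeomorph.mulLeft p.2).trans (Homeomorph.mulRight p.2⁻¹)) '' (S : Set E) := by
      rw [hTset]; rfl
    rw [heq]
    exact ((Homeomorph.mulLeft p.2).trans (Homeomorph.mulRight p.2⁻¹)).isOpen_image.mpr hSo
  -- conjugation identity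
  have hconjΓ : Subgroup.map (MulAut.conj p).toMonoidHom Γ = Γ := by
    ext x
    simp only [Subgroup.mem_map, MulEquiv.coe_toMonoidHom, MulAut.conj_apply]
    constructor
    · rintro ⟨y, hy, rfl⟩
      exact mul_mem (mul_mem hp hy) (inv_mem hp)
    · intro hx
      exact ⟨p⁻¹ * x * p, mul_mem (mul_mem (inv_mem hp) hx) hp, by group⟩
  have hconjprod : Subgroup.map (MulAut.conj p).toMonoidHom (Subgroup.prod ⊤ S) =
      Subgroup.prod ⊤ T := by
    ext x
    simp only [Subgroup.mem_map, MulEquiv.coe_toMonoidHom, MulAut.conj_apply,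
      Subgroup.mem_prod, Subgroup.mem_top, true_and, hT]
    constructor
    · rintro ⟨y, hy, rfl⟩
      exact ⟨y.2, hy, rfl⟩
    · rintro ⟨s, hs, hsx⟩
      refine ⟨p⁻¹ * x * p, ?_, by group⟩
      have : (p⁻¹ * x * p).2 = p.2⁻¹ * x.2 * p.2 := rfl
      rw [this, ← hsx]
      simpa [mul_assoc] using hs
  have hstep : Subgroup.map (MulAut.conj (f p)).toMonoidHom
      (Subgroup.map f (Γ ⊓ Subgroup.prod ⊤ S)) =
      Subgroup.map f (Γ ⊓ Subgroup.prod ⊤ T) := by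
    rw [Subgroup.map_map]
    have hcomm : (MulAut.conj (f p)).toMonoidHom.comp f =
        f.comp (MulAut.conj p).toMonoidHom := by
      ext x
      rfl
    rw [hcomm, ← Subgroup.map_map,
      Subgroup.map_inf _ _ _ (MulAut.conj p).injective, hconjΓ, hconjprod]
  constructor
  · rw [hstep]
    exact core_lemma Γ hinj S T hSc hTo
  · rw [hstep, inf_comm (Subgroup.map f (Γ ⊓ Subgroup.prod ⊤ T))
      (Subgroup.map f (Γ ⊓ Subgroup.prod ⊤ S))]
    exact core_lemma Γ hinj T S hTc hSo
end
end

section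
/- Let E be a locally profinite group acting continuously on a Hausdorff topological space X. For compact open subgroups S' ⊆ S of E let ρ_{S,S'} : S'\X → S\X denote the natural projection between orbit spaces. Then the canonical map from X to the inverse limit of the projective system (S\X, ρ_{S,S'}), taken over all compact open subgroups S of E directed by reverse inclusion, is a homeomorphism. -/
open Pointwise Set

theorem vanDantzig' {E : Type*} [Group E] [TopologicalSpace E] [IsTopologicalGroup E]
    (hLC : LocallyCompactSpace E) (hT2 : T2Space E) (hTD : TotallyDisconnectedSpace E)
    {U : Set E} (hU : U ∈ nhds (1 : E)) :
    ∃ S : Subgroup E, IsCompact (S : Set E) ∧ IsOpen (S : Set E) ∧ (S : Set E) ⊆ U := by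
  classical
  obtain ⟨K, hKc, hKn⟩ := exists_compact_mem_nhds (1 : E)
  have hIK : interior K ∩ U ∈ nhds (1 : E) :=
    Filter.inter_mem (interior_mem_nhds.2 hKn) hU
  obtain ⟨W, hWclopen, h1W, hWsub⟩ :=
    (loc_compact_Haus_tot_disc_of_zero_dim.mem_nhds_iff).1 hIK
  have hWU : W ⊆ U := hWsub.trans inter_subset_right
  have hWc : IsCompact W :=
    hKc.of_isClosed_subset hWclopen.1 (hWsub.trans (inter_subset_left.trans interior_subset))
  have hWo : IsOpen W := hWclopen.2
  -- for each w ∈ W find open u ∋ w, v ∋ 1 with u * v ⊆ W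
  have key : ∀ w ∈ W, ∃ u v : Set E, IsOpen u ∧ IsOpen v ∧ w ∈ u ∧ (1 : E) ∈ v ∧
      ∀ a ∈ u, ∀ b ∈ v, a * b ∈ W := by
    intro w hw
    have hP : IsOpen ((fun p : E × E => p.1 * p.2) ⁻¹' W) := hWo.preimage continuous_mul
    have hmem : (w, (1 : E)) ∈ (fun p : E × E => p.1 * p.2) ⁻¹' W := by
      simp [hw]
    obtain ⟨u, v, hu, hv, hwu, h1v, huv⟩ := isOpen_prod_iff.1 hP w 1 hmem
    exact ⟨u, v, hu, hv, hwu, h1v, fun a ha b hb => huv (Set.mk_mem_prod ha hb)⟩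
  choose! u v hu hv hwu h1v huv using key
  obtain ⟨t, ht⟩ := hWc.elim_finite_subcover (fun w : W => u w)
    (fun w => hu w w.2) (fun x hx => Set.mem_iUnion.2 ⟨⟨x, hx⟩, hwu x hx⟩)
  have hWt : ∃ tt : Finset E, (∀ w ∈ tt, w ∈ W) ∧ W ⊆ ⋃ w ∈ tt, u w := by
    refine ⟨t.image Subtype.val, ?_, ?_⟩
    · intro w hw
      simp only [Finset.mem_image] at hw
      obtain ⟨a, _, rfl⟩ := hw; exact a.2
    · intro x hx
      obtain ⟨s, hs⟩ := Set.mem_iUnion.1 (ht hx)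
      simp only [Set.mem_iUnion, exists_prop] at hs ⊢
      obtain ⟨hst, hxu⟩ := hs
      exact ⟨s, Finset.mem_image_of_mem _ hst, hxu⟩
  obtain ⟨tt, htt, httcov⟩ := hWt
  set V : Set E := W ∩ ⋂ w ∈ tt, v w with hVdef
  have hVo : IsOpen V := hWo.inter (isOpen_biInter_finset fun w hw => hv w (htt w hw))
  have h1V : (1 : E) ∈ V := ⟨h1W, Set.mem_biInter fun w hw => h1v w (htt w hw)⟩
  have hWV : ∀ a ∈ W, ∀ b ∈ V, a * b ∈ W := by
    intro a ha b hb
    obtain ⟨_, ⟨w, rfl⟩, hmem⟩ := httcov ha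
    simp only [Set.mem_iUnion, exists_prop] at hmem
    obtain ⟨hwtt, hau⟩ := hmem
    exact huv w (htt w hwtt) a hau b (Set.mem_iInter₂.1 hb.2 w hwtt)
  set V' : Set E := V ∩ V⁻¹ with hV'def
  have hV'o : IsOpen V' := hVo.inter hVo.inv
  have h1V' : (1 : E) ∈ V' := ⟨h1V, by simpa using h1V⟩
  have hV'symm : V'⁻¹ = V' := by
    rw [hV'def, Set.inter_inv, inv_inv, Set.inter_comm]
  have hV'V : V' ⊆ V := inter_subset_left
  have hVW : V ⊆ W := inter_subset_left
  -- powers of V' stay in W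
  have hpow : ∀ n : ℕ, V' ^ (n + 1) ⊆ W := by
    intro n
    induction n with
    | zero => simpa using hV'V.trans hVW
    | succ n ih =>
      rw [pow_succ]
      rintro x hx
      rw [Set.mem_mul] at hx
      obtain ⟨a, ha, b, hb, rfl⟩ := hx
      exact hWV a (ih ha) b (hV'V hb)
  have hsubW : (Subgroup.closure V' : Set E) ⊆ W := by
    intro x hx
    have : x ∈ ⋃ n : ℕ, V' ^ (n + 1) := by
      induction hx using Subgroup.closure_induction with
      | mem y hy => exact Set.mem_iUnion.2 ⟨0, by simpa using hy⟩
      | one => exact Set.mem_iUnion.2 ⟨0, by simpa using h1V'⟩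
      | mul a b ha hb iha ihb =>
        obtain ⟨m, hm⟩ := Set.mem_iUnion.1 iha
        obtain ⟨n, hn⟩ := Set.mem_iUnion.1 ihb
        refine Set.mem_iUnion.2 ⟨m + n + 1, ?_⟩
        rw [show m + n + 1 + 1 = (m + 1) + (n + 1) by omega, pow_add]
        exact Set.mul_mem_mul hm hn
      | inv a ha iha =>
        obtain ⟨m, hm⟩ := Set.mem_iUnion.1 iha
        refine Set.mem_iUnion.2 ⟨m, ?_⟩
        have : a⁻¹ ∈ (V' ^ (m + 1))⁻¹ := by simpa using hm
        rwa [← inv_pow, hV'symm] at this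
    obtain ⟨n, hn⟩ := Set.mem_iUnion.1 this
    exact hpow n hn
  have hopen : IsOpen (Subgroup.closure V' : Set E) :=
    Subgroup.isOpen_of_mem_nhds _
      (Filter.mem_of_superset (hV'o.mem_nhds h1V') Subgroup.subset_closure)
  exact ⟨Subgroup.closure V',
    hWc.of_isClosed_subset ((Subgroup.closure V').isClosed_of_isOpen hopen) hsubW,
    hopen, hsubW.trans hWU⟩


noncomputable section

/-- The compact open subgroups of a topological group. -/
def CompactOpenSubgroups (E : Type*) [Group E] [TopologicalSpace E] : Type _ :=
  {S : Subgroup E // IsCompact (S : Set E) ∧ IsOpen (S : Set E)}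

/-- The natural projection `S'\X → S\X` between orbit spaces, for `S' ⊆ S`. -/
def orbitMap {E X : Type*} [Group E] [MulAction E X] {S S' : Subgroup E} (h : S' ≤ S) :
    Quotient (MulAction.orbitRel S' X) → Quotient (MulAction.orbitRel S X) :=
  Quotient.map (fun x => x) (fun x y hxy => by
    obtain ⟨s, hs⟩ := hxy
    exact ⟨⟨(s : E), h s.2⟩, hs⟩)

/-- The canonical map from `X` to the inverse limit of the orbit spaces `S\X`, taken over all
compact open subgroups `S` of `E` directed by reverse inclusion. -/
def canonicalMapToInvLim (E X : Type*) [Group E] [TopologicalSpace E] [TopologicalSpace X]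
    [MulAction E X] :
    X → {f : ∀ S : CompactOpenSubgroups E, Quotient (MulAction.orbitRel S.1 X) //
          ∀ (S S' : CompactOpenSubgroups E) (h : S'.1 ≤ S.1), orbitMap h (f S') = f S} :=
  fun x => ⟨fun S => Quotient.mk (MulAction.orbitRel S.1 X) x, fun _ _ _ => rfl⟩


section Aux

open MulAction

variable {E X : Type*} [Group E] [TopologicalSpace E] [IsTopologicalGroup E]
    [TopologicalSpace X] [T2Space X] [MulAction E X] [ContinuousSMul E X]

/-- The intersection of two compact open subgroups is a compact open subgroup. -/
def COSinf {E : Type*} [Group E] [TopologicalSpace E] [IsTopologicalGroup E]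
    (S T : CompactOpenSubgroups E) : CompactOpenSubgroups E :=
  ⟨S.1 ⊓ T.1, by
    rw [Subgroup.coe_inf]
    exact ⟨S.2.1.inter_right (T.1.isClosed_of_isOpen T.2.2), S.2.2.inter T.2.2⟩⟩

theorem COSinf_le_left {E : Type*} [Group E] [TopologicalSpace E] [IsTopologicalGroup E]
    (S T : CompactOpenSubgroups E) : (COSinf S T).1 ≤ S.1 := inf_le_left

theorem COSinf_le_right {E : Type*} [Group E] [TopologicalSpace E] [IsTopologicalGroup E]
    (S T : CompactOpenSubgroups E) : (COSinf S T).1 ≤ T.1 := inf_le_right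

theorem orbit_isCompact {S : Subgroup E} (hS : IsCompact (S : Set E)) (x : X) :
    IsCompact (MulAction.orbit S x) := by
  have h : MulAction.orbit S x = (fun e : E => e • x) '' (S : Set E) := by
    ext y
    simp only [MulAction.mem_orbit_iff, Set.mem_image, Subgroup.smul_def, Subtype.exists,
      exists_prop]
    tauto
  rw [h]
  exact hS.image (continuous_id.smul continuous_const)

theorem mk_eq_mk_iff {S : Subgroup E} (x y : X) :
    Quotient.mk (MulAction.orbitRel S X) x = Quotient.mk (MulAction.orbitRel S X) y ↔
      ∃ s : S, s • y = x := by
  rw [Quotient.eq, MulAction.orbitRel_apply, MulAction.mem_orbit_iff]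

theorem isOpen_mk_image {S : Subgroup E} {O : Set X} (hO : IsOpen O)
    (hinv : ∀ s ∈ S, ∀ y ∈ O, s • y ∈ O) :
    IsOpen (Quotient.mk (MulAction.orbitRel S X) '' O) := by
  have hq := isQuotientMap_quotient_mk' (s := MulAction.orbitRel S X)
  rw [← hq.isOpen_preimage]
  have heq : Quotient.mk (MulAction.orbitRel S X) ⁻¹' (Quotient.mk (MulAction.orbitRel S X) '' O)
      = O := by
    ext y
    constructor
    · rintro ⟨o, ho, heq⟩
      obtain ⟨s, rfl⟩ := (mk_eq_mk_iff y o).1 heq.symm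
      exact hinv s s.2 o ho
    · intro hy
      exact ⟨y, hy, rfl⟩
  show IsOpen (Quotient.mk (MulAction.orbitRel S X) ⁻¹' (Quotient.mk (MulAction.orbitRel S X) '' O))
  rwa [heq]

theorem orbitMap_mk {S S' : Subgroup E} (h : S' ≤ S) (x : X) :
    orbitMap (X := X) h (Quotient.mk (MulAction.orbitRel S' X) x) =
      Quotient.mk (MulAction.orbitRel S X) x := rfl

end Aux

/-- Let `E` be a locally profinite group acting continuously on a Hausdorff
space `X`. Then the canonical map from `X` to the inverse limit of the orbit spaces `S\X`,
over all compact open subgroups `S` of `E` directed by reverse inclusion, is a homeomorphism. -/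
theorem canonicalMapToInvLim_isHomeomorph {E X : Type*}
    [Group E] [TopologicalSpace E] [IsTopologicalGroup E]
    [TopologicalSpace X] [T2Space X] [MulAction E X] [ContinuousSMul E X]
    (hE : IsLocallyProfinite E) :
    IsHomeomorph (canonicalMapToInvLim E X) := by
  classical
  obtain ⟨hLC, hT2, hTD⟩ := hE
  obtain ⟨S₀s, hS₀c, hS₀o, -⟩ := vanDantzig' hLC hT2 hTD (Filter.univ_mem)
  let S₀ : CompactOpenSubgroups E := ⟨S₀s, hS₀c, hS₀o⟩
  set F := canonicalMapToInvLim E X with hF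
  -- Injectivity
  have hinj : Function.Injective F := by
    intro x y hxy
    have h1 : ∀ S : CompactOpenSubgroups E,
        Quotient.mk (MulAction.orbitRel S.1 X) x = Quotient.mk (MulAction.orbitRel S.1 X) y :=
      fun S => congrFun (congrArg Subtype.val hxy) S
    set t : CompactOpenSubgroups E → Set E := fun S =>
      (((COSinf S₀ S).1 : Set E)) ∩ {e : E | e • y = x} with ht
    have htcl : ∀ S, IsClosed (t S) := fun S =>
      ((COSinf S₀ S).1.isClosed_of_isOpen (COSinf S₀ S).2.2).inter
        (isClosed_singleton.preimage (continuous_id.smul continuous_const))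
    have htc : ∀ S, IsCompact (t S) := fun S =>
      (COSinf S₀ S).2.1.inter_right
        (isClosed_singleton.preimage (continuous_id.smul continuous_const))
    have htn : ∀ S, (t S).Nonempty := by
      intro S
      obtain ⟨s, hs⟩ := (mk_eq_mk_iff (S := (COSinf S₀ S).1) x y).1 (h1 (COSinf S₀ S))
      exact ⟨(s : E), s.2, hs⟩
    have htd : Directed (· ⊇ ·) t := by
      intro S S'
      refine ⟨COSinf S S', ?_, ?_⟩
      · rintro e ⟨he, hx⟩
        exact ⟨Subgroup.mem_inf.2 ⟨(Subgroup.mem_inf.1 he).1,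
          ((Subgroup.mem_inf.1 (Subgroup.mem_inf.1 he).2).1)⟩, hx⟩
      · rintro e ⟨he, hx⟩
        exact ⟨Subgroup.mem_inf.2 ⟨(Subgroup.mem_inf.1 he).1,
          ((Subgroup.mem_inf.1 (Subgroup.mem_inf.1 he).2).2)⟩, hx⟩
    obtain ⟨e, he⟩ := IsCompact.nonempty_iInter_of_directed_nonempty_isCompact_isClosed
      (hι := ⟨S₀⟩) t htd htn htc htcl
    have hex : e • y = x := (Set.mem_iInter.1 he S₀).2
    have he1 : e = 1 := by
      by_contra hne
      obtain ⟨T, hTc, hTo, hTsub⟩ := vanDantzig' hLC hT2 hTD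
        (compl_singleton_mem_nhds (Ne.symm hne))
      have := (Set.mem_iInter.1 he ⟨T, hTc, hTo⟩).1
      exact hTsub (Subgroup.mem_inf.1 this).2 rfl
    rw [he1, one_smul] at hex
    exact hex.symm
  -- Surjectivity
  have hsurj : Function.Surjective F := by
    rintro ⟨f, hf⟩
    obtain ⟨x₀, hx₀⟩ := Quotient.exists_rep (f S₀)
    set K := MulAction.orbit S₀.1 x₀ with hK
    have hKc : IsCompact K := orbit_isCompact hS₀c x₀
    set t : CompactOpenSubgroups E → Set X := fun S =>
      {x ∈ K | Quotient.mk (MulAction.orbitRel (COSinf S₀ S).1 X) x = f (COSinf S₀ S)} with ht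
    have hrep : ∀ S : CompactOpenSubgroups E, ∀ r : X,
        Quotient.mk (MulAction.orbitRel (COSinf S₀ S).1 X) r = f (COSinf S₀ S) →
        t S = K ∩ MulAction.orbit (COSinf S₀ S).1 r := by
      intro S r hr
      ext z
      simp only [ht, Set.mem_setOf_eq, Set.mem_inter_iff, Set.mem_sep_iff]
      constructor
      · rintro ⟨hz, hmk⟩
        refine ⟨hz, ?_⟩
        rw [← hr] at hmk
        obtain ⟨s, hs⟩ := (mk_eq_mk_iff z r).1 hmk
        exact ⟨s, hs⟩
      · rintro ⟨hz, s, hs⟩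
        exact ⟨hz, by rw [← hr]; exact (mk_eq_mk_iff z r).2 ⟨s, hs⟩⟩
    have htn : ∀ S, (t S).Nonempty := by
      intro S
      obtain ⟨r, hr⟩ := Quotient.exists_rep (f (COSinf S₀ S))
      have hcomp := hf S₀ (COSinf S₀ S) (COSinf_le_left S₀ S)
      rw [← hr, orbitMap_mk] at hcomp
      have hrK : r ∈ K := by
        rw [← hx₀] at hcomp
        obtain ⟨s, hs⟩ := (mk_eq_mk_iff r x₀).1 hcomp
        exact ⟨s, hs⟩
      exact ⟨r, hrK, hr⟩
    have htc : ∀ S, IsCompact (t S) := by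
      intro S
      obtain ⟨r, hr⟩ := Quotient.exists_rep (f (COSinf S₀ S))
      rw [hrep S r hr]
      exact hKc.inter_right (orbit_isCompact (COSinf S₀ S).2.1 r).isClosed
    have htcl : ∀ S, IsClosed (t S) := by
      intro S
      obtain ⟨r, hr⟩ := Quotient.exists_rep (f (COSinf S₀ S))
      rw [hrep S r hr]
      exact hKc.isClosed.inter (orbit_isCompact (COSinf S₀ S).2.1 r).isClosed
    have htd : Directed (· ⊇ ·) t := by
      intro S S'
      refine ⟨COSinf S S', ?_, ?_⟩
      · rintro z ⟨hz, hmk⟩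
        refine ⟨hz, ?_⟩
        have hle : (COSinf S₀ (COSinf S S')).1 ≤ (COSinf S₀ S).1 :=
          le_inf inf_le_left (le_trans inf_le_right inf_le_left)
        have := hf (COSinf S₀ S) (COSinf S₀ (COSinf S S')) hle
        rw [← hmk, orbitMap_mk] at this
        exact this
      · rintro z ⟨hz, hmk⟩
        refine ⟨hz, ?_⟩
        have hle : (COSinf S₀ (COSinf S S')).1 ≤ (COSinf S₀ S').1 :=
          le_inf inf_le_left (le_trans inf_le_right inf_le_right)
        have := hf (COSinf S₀ S') (COSinf S₀ (COSinf S S')) hle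
        rw [← hmk, orbitMap_mk] at this
        exact this
    obtain ⟨x, hx⟩ := IsCompact.nonempty_iInter_of_directed_nonempty_isCompact_isClosed
      (hι := ⟨S₀⟩) t htd htn htc htcl
    refine ⟨x, Subtype.ext (funext fun S => ?_)⟩
    have hxS := (Set.mem_iInter.1 hx S).2
    have := hf S (COSinf S₀ S) (COSinf_le_right S₀ S)
    rw [← hxS, orbitMap_mk] at this
    exact this
  -- Continuity
  have hcont : Continuous F :=
    Continuous.subtype_mk (continuous_pi fun S => continuous_quot_mk) _
  -- Openness
  have hopenmap : IsOpenMap F := by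
    intro U hU
    rw [isOpen_iff_forall_mem_open]
    rintro g ⟨x, hxU, rfl⟩
    have hP : IsOpen ((fun p : E × X => p.1 • p.2) ⁻¹' U) := hU.preimage continuous_smul
    have hmem : ((1 : E), x) ∈ (fun p : E × X => p.1 • p.2) ⁻¹' U := by
      simpa using hxU
    obtain ⟨V, W, hVo, hWo, h1V, hxW, hVW⟩ := isOpen_prod_iff.1 hP 1 x hmem
    obtain ⟨Ss, hSc, hSo, hSsub⟩ := vanDantzig' hLC hT2 hTD (hVo.mem_nhds h1V)
    let S : CompactOpenSubgroups E := ⟨Ss, hSc, hSo⟩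
    set O : Set X := ⋃ s : Ss, (s : E) • W with hO
    have hOo : IsOpen O := isOpen_iUnion fun s => hWo.smul _
    have hxO : x ∈ O := Set.mem_iUnion.2 ⟨⟨1, Ss.one_mem⟩, ⟨x, hxW, one_smul E x⟩⟩
    have hOU : O ⊆ U := by
      rintro z hz
      obtain ⟨s, hs⟩ := Set.mem_iUnion.1 hz
      obtain ⟨w, hw, rfl⟩ := hs
      exact hVW (Set.mk_mem_prod (hSsub s.2) hw)
    have hOinv : ∀ s ∈ Ss, ∀ y ∈ O, s • y ∈ O := by
      intro s hs y hy
      obtain ⟨s', hs'⟩ := Set.mem_iUnion.1 hy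
      obtain ⟨w, hw, rfl⟩ := hs'
      refine Set.mem_iUnion.2 ⟨⟨s * (s' : E), Ss.mul_mem hs s'.2⟩, ⟨w, hw, ?_⟩⟩
      simp [smul_smul]
    refine ⟨(fun g => g.1 S) ⁻¹' (Quotient.mk (MulAction.orbitRel Ss X) '' O), ?_, ?_, ?_⟩
    · rintro g hg
      obtain ⟨y, rfl⟩ := hsurj g
      obtain ⟨o, ho, heq⟩ := hg
      obtain ⟨s, rfl⟩ := (mk_eq_mk_iff y o).1 heq.symm
      exact ⟨s • o, hOU (hOinv s s.2 o ho), rfl⟩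
    · exact (isOpen_mk_image hOo hOinv).preimage
        ((continuous_apply S).comp continuous_subtype_val)
    · exact ⟨x, hxO, rfl⟩
  exact ⟨hcont, hopenmap, hinj, hsurj⟩
end
end

section
/- Let G be a group and H a subgroup of finite index in G. If every element of G is conjugate to an element of H, i.e. G = ⋃_{g ∈ G} g H g⁻¹, then G = H. -/
open scoped Pointwise


/-- Let `G` be a group and `H` a subgroup of finite index in `G`. If every
element of `G` is conjugate to an element of `H`, i.e. `G = ⋃_{g ∈ G} g H g⁻¹`, then `G = H`. -/
theorem subgroup_eq_top_of_finiteIndex_of_conj_cover {G : Type*} [Group G]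
    (H : Subgroup G) (hfin : H.FiniteIndex)
    (hcover : ∀ g : G, ∃ x : G, ∃ h ∈ H, g = x * h * x⁻¹) :
    H = ⊤ := by
  classical
  haveI := hfin
  haveI : (Subgroup.normalizer (H : Set G)).FiniteIndex := Subgroup.finiteIndex_of_le H.le_normalizer
  haveI : Finite (G ⧸ Subgroup.normalizer (H : Set G)) := inferInstance
  cases nonempty_fintype (G ⧸ Subgroup.normalizer (H : Set G))
  -- the family of conjugates of H, indexed by cosets of the normalizer
  set K : G ⧸ Subgroup.normalizer (H : Set G) → Subgroup G :=
    fun q => H.comap ((MulAut.conj (Quotient.out q)⁻¹ : MulAut G) : G →* G) with hK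
  have hmemK : ∀ (q : G ⧸ Subgroup.normalizer (H : Set G)) (g : G),
      g ∈ K q ↔ (Quotient.out q)⁻¹ * g * Quotient.out q ∈ H := by
    intro q g
    simp [hK, Subgroup.mem_comap, MulAut.conj_apply, mul_assoc]
  -- the conjugates cover G
  have hcovers : ⋃ q ∈ (Finset.univ : Finset (G ⧸ Subgroup.normalizer (H : Set G))),
      ((1 : G) • (K q : Set G)) = Set.univ := by
    apply Set.eq_univ_of_forall
    intro g
    obtain ⟨x, h, hh, rfl⟩ := hcover g
    refine Set.mem_iUnion₂.mpr ⟨QuotientGroup.mk x, Finset.mem_univ _, ?_⟩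
    rw [one_smul]
    obtain ⟨n, hn⟩ := QuotientGroup.mk_out_eq_mul (Subgroup.normalizer (H : Set G)) x
    show (x * h * x⁻¹) ∈ K _
    rw [hmemK, hn]
    have hnN : (n : G) ∈ Subgroup.normalizer (H : Set G) := n.2
    rw [Subgroup.mem_normalizer_iff''] at hnN
    have : (x * (n : G))⁻¹ * (x * h * x⁻¹) * (x * (n : G)) = (n : G)⁻¹ * h * (n : G) := by
      group
    rw [this]
    exact (hnN h).mp hh
  -- each conjugate has the same (finite) index
  have hindex : ∀ q : G ⧸ Subgroup.normalizer (H : Set G), (K q).index = H.index := by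
    intro q
    exact Subgroup.index_comap_of_surjective H (MulEquiv.surjective _)
  -- the sum of inverse indices is at least one
  have hsum := Subgroup.one_le_sum_inv_index_of_leftCoset_cover hcovers
  simp only [hindex] at hsum
  rw [Finset.sum_const, Finset.card_univ, nsmul_eq_mul] at hsum
  have hcard : Fintype.card (G ⧸ Subgroup.normalizer (H : Set G)) = (Subgroup.normalizer (H : Set G)).index := by
    rw [Subgroup.index, Nat.card_eq_fintype_card]
  -- normalizer index divides H's index, hence is ≤
  have hdvd : (Subgroup.normalizer (H : Set G)).index ∣ H.index := Subgroup.index_dvd_of_le H.le_normalizer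
  have hle : (Subgroup.normalizer (H : Set G)).index ≤ H.index :=
    Nat.le_of_dvd (Nat.pos_of_ne_zero hfin.index_ne_zero) hdvd
  have hpos : (0 : ℚ) < (H.index : ℚ) := by
    exact_mod_cast Nat.pos_of_ne_zero hfin.index_ne_zero
  have hge : (H.index : ℚ) ≤ ((Subgroup.normalizer (H : Set G)).index : ℚ) := by
    rw [hcard] at hsum
    calc (H.index : ℚ) = 1 * H.index := (one_mul _).symm
      _ ≤ (((Subgroup.normalizer (H : Set G)).index : ℚ) * (H.index : ℚ)⁻¹) * H.index :=
          mul_le_mul_of_nonneg_right hsum hpos.le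
      _ = (Subgroup.normalizer (H : Set G)).index := by field_simp
  have heq : (Subgroup.normalizer (H : Set G)).index = H.index := le_antisymm hle (by exact_mod_cast hge)
  -- equality case: the cosets are pairwise disjoint, but all conjugates contain 1
  have hsum1 : ∑ q ∈ (Finset.univ : Finset (G ⧸ Subgroup.normalizer (H : Set G))), ((K q).index : ℚ)⁻¹ = 1 := by
    simp only [hindex, Finset.sum_const, Finset.card_univ, nsmul_eq_mul, hcard, heq]
    field_simp
  have hdisj := Subgroup.pairwiseDisjoint_leftCoset_cover_of_sum_inv_index_eq_one hcovers hsum1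
  -- all the sets contain 1, so there is only one coset
  have hsub : Subsingleton (G ⧸ Subgroup.normalizer (H : Set G)) := by
    constructor
    intro a b
    by_contra hab
    have ha : a ∈ Finset.filter (fun q => (K q).FiniteIndex)
        (Finset.univ : Finset (G ⧸ Subgroup.normalizer (H : Set G))) := by
      simp only [Finset.mem_filter, Finset.mem_univ, true_and]
      exact ⟨by rw [hindex]; exact hfin.index_ne_zero⟩
    have hb : b ∈ Finset.filter (fun q => (K q).FiniteIndex)
        (Finset.univ : Finset (G ⧸ Subgroup.normalizer (H : Set G))) := by
      simp only [Finset.mem_filter, Finset.mem_univ, true_and]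
      exact ⟨by rw [hindex]; exact hfin.index_ne_zero⟩
    have := hdisj ha hb hab
    have h1a : (1 : G) ∈ (1 : G) • (K a : Set G) := by
      rw [one_smul]; exact (K a).one_mem
    have h1b : (1 : G) ∈ (1 : G) • (K b : Set G) := by
      rw [one_smul]; exact (K b).one_mem
    exact Set.disjoint_left.mp this h1a h1b
  have hNtop : (Subgroup.normalizer (H : Set G)).index = 1 := by
    rw [Subgroup.index, Nat.card_eq_fintype_card]
    exact Fintype.card_eq_one_iff.mpr ⟨Quotient.mk'' 1, fun y => Subsingleton.elim _ _⟩
  rw [← Subgroup.index_eq_one, ← heq, hNtop]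
end

section
/- Let K be a field of characteristic zero with algebraic closure K̄, let d ≥ 1, and let g ∈ GL_d(K). Then the characteristic polynomial of g is irreducible over K if and only if there exist λ ∈ K̄ and a nonzero vector v ∈ K̄^d with g v = λ v such that: (i) λ is a simple root of the characteristic polynomial of g (it has multiplicity one), and (ii) v does not lie on any K-rational hyperplane, i.e. for every nonzero a ∈ K^d one has Σ_i a_i v_i ≠ 0. -/
noncomputable section

open Polynomial Matrix

lemma my_eval_charpoly {n : Type*} [Fintype n] [DecidableEq n] {R : Type*} [CommRing R]
    (A : Matrix n n R) (μ : R) : A.charpoly.eval μ = (μ • (1 : Matrix n n R) - A).det := by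
  rw [Matrix.charpoly, ← Polynomial.coe_evalRingHom, RingHom.map_det]
  congr 1
  ext i j
  by_cases h : i = j <;>
    simp [charmatrix_apply, h, Matrix.one_apply, Matrix.diagonal_apply]

lemma my_exists_eigenvector {n : Type*} [Fintype n] [DecidableEq n] {L : Type*} [Field L]
    (A : Matrix n n L) (μ : L) (h : A.charpoly.eval μ = 0) :
    ∃ w, w ≠ 0 ∧ A.mulVec w = μ • w := by
  have hdet : (μ • (1 : Matrix n n L) - A).det = 0 := by rw [← my_eval_charpoly]; exact h
  obtain ⟨w, hw0, hw⟩ := (Matrix.exists_mulVec_eq_zero_iff).2 hdet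
  refine ⟨w, hw0, ?_⟩
  rw [Matrix.sub_mulVec, Matrix.smul_mulVec, Matrix.one_mulVec, sub_eq_zero] at hw
  exact hw.symm

lemma my_aeval_mulVec {n : Type*} [Fintype n] [DecidableEq n] {L : Type*} [Field L]
    (A : Matrix n n L) {μ : L} {w : n → L} (hw : w ≠ 0) (h : A.mulVec w = μ • w) (q : L[X]) :
    (Polynomial.aeval A q).mulVec w = q.eval μ • w := by
  have hev : Module.End.HasEigenvector (Matrix.toLinAlgEquiv' A) μ w :=
    ⟨Module.End.mem_eigenspace_iff.2 (by simpa [Matrix.toLinAlgEquiv'_apply] using h), hw⟩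
  have h2 := Module.End.aeval_apply_of_hasEigenvector hev (p := q)
  rw [Polynomial.aeval_algEquiv] at h2
  simpa [Matrix.toLinAlgEquiv'_apply] using h2

lemma my_aeval_transpose {n : Type*} [Fintype n] [DecidableEq n] {R S : Type*} [CommSemiring R]
    [CommRing S] [Algebra R S] (M : Matrix n n S) (q : R[X]) :
    Polynomial.aeval Mᵀ q = (Polynomial.aeval M q)ᵀ := by
  induction q using Polynomial.induction_on' with
  | add p q hp hq => simp [hp, hq]
  | monomial k a =>
      simp [Polynomial.aeval_monomial, Algebra.algebraMap_eq_smul_one, Matrix.transpose_smul,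
        Matrix.transpose_pow, smul_mul_assoc, mul_smul_comm]

/-- mapping a `K`-aeval of a matrix along `algebraMap K L`. -/
lemma my_aeval_map {n : Type*} [Fintype n] [DecidableEq n] {K L : Type*} [Field K] [Field L]
    [Algebra K L] (M : Matrix n n K) (q : K[X]) :
    (Polynomial.aeval M q).map (algebraMap K L) =
      Polynomial.aeval (M.map (algebraMap K L)) q :=
  (Polynomial.aeval_algHom_apply
    (AlgHom.mapMatrix (Algebra.ofId K L) : Matrix n n K →ₐ[K] Matrix n n L) M q).symm

/-- Let `K` be a field of characteristic zero with algebraic closure `K̄`,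
`d ≥ 1`, and `g ∈ GL_d(K)`. The characteristic polynomial of `g` is irreducible over `K` if
and only if there is an eigenvalue `λ ∈ K̄` and a nonzero eigenvector `v ∈ K̄^d` of `g` such
that `λ` is a simple root of the characteristic polynomial and `v` does not lie on any
`K`-rational hyperplane. -/
theorem charpoly_irreducible_iff_elliptic {K : Type*} [Field K] [CharZero K]
    (d : ℕ) (hd : 1 ≤ d) (g : Matrix.GeneralLinearGroup (Fin d) K) :
    Irreducible (Matrix.charpoly (g : Matrix (Fin d) (Fin d) K)) ↔
      ∃ (lam : AlgebraicClosure K) (v : Fin d → AlgebraicClosure K),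
        v ≠ 0 ∧
        Matrix.mulVec
            ((g : Matrix (Fin d) (Fin d) K).map (algebraMap K (AlgebraicClosure K))) v =
          lam • v ∧
        Polynomial.rootMultiplicity lam
            ((Matrix.charpoly (g : Matrix (Fin d) (Fin d) K)).map
              (algebraMap K (AlgebraicClosure K))) = 1 ∧
        ∀ a : Fin d → K, a ≠ 0 →
          (∑ i, algebraMap K (AlgebraicClosure K) (a i) * v i) ≠ 0 := by
  classical
  set L := AlgebraicClosure K with hL
  set φ := algebraMap K L with hφ
  set M : Matrix (Fin d) (Fin d) K := (g : Matrix (Fin d) (Fin d) K) with hM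
  set A : Matrix (Fin d) (Fin d) L := M.map φ with hA
  have hmonic : M.charpoly.Monic := Matrix.charpoly_monic M
  have hdeg : M.charpoly.natDegree = d := by
    simp [Matrix.charpoly_natDegree_eq_dim]
  have hcharA : A.charpoly = M.charpoly.map φ := Matrix.charpoly_map M φ
  have hmapmonic : (M.charpoly.map φ).Monic := hmonic.map φ
  constructor
  · intro hirr
    have hndeg : 0 < (M.charpoly.map φ).natDegree := by
      rw [hmonic.natDegree_map]; omega
    obtain ⟨lam, hlam⟩ := IsAlgClosed.exists_root (M.charpoly.map φ)
      (Polynomial.natDegree_pos_iff_degree_pos.1 hndeg).ne'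
    obtain ⟨v, hv0, hAv⟩ := my_exists_eigenvector A lam (by rw [hcharA]; exact hlam)
    refine ⟨lam, v, hv0, hAv, ?_, ?_⟩
    · have hsep : (M.charpoly).Separable := PerfectField.separable_of_irreducible hirr
      have h1 : rootMultiplicity lam (M.charpoly.map φ) ≤ 1 :=
        rootMultiplicity_le_one_of_separable (hsep.map) lam
      have h2 : 0 < rootMultiplicity lam (M.charpoly.map φ) :=
        (Polynomial.rootMultiplicity_pos hmapmonic.ne_zero).2 hlam
      omega
    · intro a ha hsum
      -- the evaluation linear map
      let ψ : K[X] →ₗ[K] (Fin d → K) :=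
        { toFun := fun q => (Polynomial.aeval Mᵀ q).mulVec a
          map_add' := fun p q => by simp [Matrix.add_mulVec]
          map_smul' := fun c q => by
            simp [_root_.map_smul, Matrix.smul_mulVec] }
      -- key identity
      have hkey : ∀ q : K[X], ∑ j, φ ((ψ q) j) * v j = 0 := by
        intro q
        have h1 : ∀ j, φ ((ψ q) j) =
            (((Polynomial.aeval Mᵀ q).map φ).mulVec (fun i => φ (a i))) j := by
          intro j
          exact RingHom.map_mulVec φ (Polynomial.aeval Mᵀ q) a j
        have h2 : (Polynomial.aeval Mᵀ q).map φ = (Polynomial.aeval A (q.map φ))ᵀ := by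
          rw [my_aeval_map, Matrix.transpose_map, my_aeval_transpose,
            Polynomial.aeval_map_algebraMap]
        calc ∑ j, φ ((ψ q) j) * v j
            = (((Polynomial.aeval A (q.map φ))ᵀ).mulVec (fun i => φ (a i))) ⬝ᵥ v := by
              simp only [h1, h2]; rfl
          _ = (fun i => φ (a i)) ⬝ᵥ ((Polynomial.aeval A (q.map φ)).mulVec v) := by
              rw [Matrix.mulVec_transpose, ← Matrix.dotProduct_mulVec]
          _ = (q.map φ).eval lam * ((fun i => φ (a i)) ⬝ᵥ v) := by
              rw [my_aeval_mulVec A hv0 hAv, dotProduct_smul, smul_eq_mul]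
          _ = 0 := by
              have : (fun i => φ (a i)) ⬝ᵥ v = 0 := hsum
              rw [this, mul_zero]
      -- ideal of relations
      let I : Ideal K[X] :=
        { carrier := {q | (Polynomial.aeval Mᵀ q).mulVec a = 0}
          add_mem' := fun hp hq => by
            simp only [Set.mem_setOf_eq, map_add, Matrix.add_mulVec] at *
            rw [hp, hq, add_zero]
          zero_mem' := by simp [Set.mem_setOf_eq]
          smul_mem' := fun c q hq => by
            simp only [Set.mem_setOf_eq, smul_eq_mul, _root_.map_mul] at *
            rw [← Matrix.mulVec_mulVec, hq, Matrix.mulVec_zero] }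
      have hpI : M.charpoly ∈ I := by
        show (Polynomial.aeval Mᵀ M.charpoly).mulVec a = 0
        rw [my_aeval_transpose, Matrix.aeval_self_charpoly]
        simp
      have h1I : (1 : K[X]) ∉ I := by
        intro h
        apply ha
        have : (Polynomial.aeval Mᵀ (1 : K[X])).mulVec a = 0 := h
        simpa [Matrix.one_mulVec] using this
      have hspan : Ideal.span {M.charpoly} ≤ I := (Ideal.span_singleton_le_iff_mem _).2 hpI
      have hmax : (Ideal.span {M.charpoly}).IsMaximal :=
        PrincipalIdealRing.isMaximal_of_irreducible hirr
      have hIne : I ≠ ⊤ := fun h => h1I (h ▸ Submodule.mem_top)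
      have hI : Ideal.span {M.charpoly} = I := hmax.eq_of_le hIne hspan
      set P : Submodule K K[X] :=
        Submodule.restrictScalars K (Ideal.span {M.charpoly} : Ideal K[X]) with hP
      have hker : LinearMap.ker ψ = P := by
        rw [hP, hI]
        ext q
        exact Iff.rfl
      let ψbar : (K[X] ⧸ P) →ₗ[K] (Fin d → K) := P.liftQ ψ (le_of_eq hker.symm)
      have hinj : Function.Injective ψbar := by
        rw [← LinearMap.ker_eq_bot]
        exact Submodule.ker_liftQ_eq_bot _ _ _ (le_of_eq hker)
      have hchar0 : M.charpoly ≠ 0 := hmonic.ne_zero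
      let e2 : (K[X] ⧸ P) ≃ₗ[K] AdjoinRoot M.charpoly :=
        Submodule.Quotient.restrictScalarsEquiv K (Ideal.span {M.charpoly} : Ideal K[X])
      haveI : FiniteDimensional K (AdjoinRoot M.charpoly) :=
        Module.Finite.of_basis (AdjoinRoot.powerBasis hchar0).basis
      haveI : FiniteDimensional K (K[X] ⧸ P) := LinearEquiv.finiteDimensional e2.symm
      have hfr : Module.finrank K (K[X] ⧸ P) = d := by
        rw [e2.finrank_eq, (AdjoinRoot.powerBasis hchar0).finrank, AdjoinRoot.powerBasis_dim,
          hdeg]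
      have hsurj : Function.Surjective ψbar :=
        (LinearMap.injective_iff_surjective_of_finrank_eq_finrank
          (by rw [hfr, Module.finrank_pi, Fintype.card_fin])).1 hinj
      obtain ⟨i, hvi⟩ := Function.ne_iff.1 hv0
      obtain ⟨x, hx⟩ := hsurj (Pi.single i 1)
      obtain ⟨q, rfl⟩ := Submodule.Quotient.mk_surjective P x
      have hq : ψ q = Pi.single i 1 := by
        simpa [ψbar, Submodule.liftQ_apply] using hx
      have := hkey q
      rw [hq] at this
      apply hvi
      simpa [Pi.single_apply] using this
  · rintro ⟨lam, v, hv0, hAv, hmult, hhyp⟩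
    set p := M.charpoly with hp
    have hmap0 : p.map φ ≠ 0 := hmapmonic.ne_zero
    have hlamroot : (p.map φ).IsRoot lam :=
      (Polynomial.rootMultiplicity_pos hmap0).1 (by omega)
    have haevallam : Polynomial.aeval lam p = 0 := by
      rwa [Polynomial.aeval_def, Polynomial.eval₂_eq_eval_map]
    have hint : IsIntegral K lam := ⟨p, hmonic, haevallam⟩
    set f := minpoly K lam with hf
    have hfmonic : f.Monic := minpoly.monic hint
    have hfirr : Irreducible f := minpoly.irreducible hint
    have hflam : Polynomial.aeval lam f = 0 := minpoly.aeval K lam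
    -- f annihilates M
    have hfM : Polynomial.aeval M f = 0 := by
      have hmul : ((Polynomial.aeval M f).map φ).mulVec v = 0 := by
        rw [my_aeval_map, ← Polynomial.aeval_map_algebraMap L,
          my_aeval_mulVec A hv0 hAv]
        have : (f.map φ).eval lam = 0 := by
          rwa [← Polynomial.eval₂_eq_eval_map, ← Polynomial.aeval_def]
        rw [this, zero_smul]
      ext r j
      by_contra hne
      refine hhyp (fun j => (Polynomial.aeval M f) r j) ?_ ?_
      · intro h0
        exact hne (by simpa using congrFun h0 j)
      · have := congrFun hmul r
        simpa [Matrix.mulVec, dotProduct, Matrix.map_apply] using this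
    -- minpoly of M equals f
    haveI : Nonempty (Fin d) := ⟨⟨0, hd⟩⟩
    have hMint : IsIntegral K M := ⟨p, hmonic, Matrix.aeval_self_charpoly M⟩
    have hdvd : minpoly K M ∣ f := minpoly.dvd K M hfM
    have hminM : minpoly K M = f := by
      obtain ⟨c, hc⟩ := hdvd
      rcases hfirr.isUnit_or_isUnit hc with hu | hu
      · exact absurd hu (minpoly.not_isUnit K M)
      · exact (Polynomial.eq_of_monic_of_associated (minpoly.monic hMint) hfmonic
          ⟨hu.unit, by rw [hc]; rfl⟩)
    have hfp : f ∣ p := hminM ▸ Matrix.minpoly_dvd_charpoly M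
    obtain ⟨s, hs⟩ := hfp
    have hsmonic : s.Monic := hfmonic.of_mul_monic_left (by rwa [← hs])
    by_cases hs0 : s.natDegree = 0
    · have : s = 1 := hsmonic.natDegree_eq_zero.1 hs0
      rw [hs, this, mul_one]
      exact hfirr
    · exfalso
      -- s has a root μ in L
      have hns : 0 < (s.map φ).natDegree := by rw [hsmonic.natDegree_map]; omega
      obtain ⟨μ, hμ⟩ := IsAlgClosed.exists_root (s.map φ)
        (Polynomial.natDegree_pos_iff_degree_pos.1 hns).ne'
      -- μ is a root of charpoly, get eigenvector
      have hμp : (p.map φ).eval μ = 0 := by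
        rw [hs, Polynomial.map_mul, Polynomial.eval_mul, hμ.eq_zero, mul_zero]
      obtain ⟨w, hw0, hAw⟩ := my_exists_eigenvector A μ (by rw [hcharA]; exact hμp)
      -- f(μ) = 0
      have hfμ : Polynomial.aeval μ f = 0 := by
        have : ((Polynomial.aeval M f).map φ).mulVec w = ((f.map φ).eval μ) • w := by
          rw [my_aeval_map, ← Polynomial.aeval_map_algebraMap L, my_aeval_mulVec A hw0 hAw]
        rw [hfM, Matrix.map_zero _ (map_zero φ), Matrix.zero_mulVec] at this
        have heval : (f.map φ).eval μ = 0 := by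
          rcases smul_eq_zero.1 this.symm with h | h
          · exact h
          · exact absurd h hw0
        rwa [Polynomial.aeval_def, Polynomial.eval₂_eq_eval_map]
      -- hence f = minpoly of μ divides s
      have hfeq : f = minpoly K μ := minpoly.eq_of_irreducible_of_monic hfirr hfμ hfmonic
      have hsμ : Polynomial.aeval μ s = 0 := by
        rwa [Polynomial.aeval_def, Polynomial.eval₂_eq_eval_map]
      have hfs : f ∣ s := by rw [hfeq]; exact minpoly.dvd K μ hsμ
      -- lam is a root of s
      have hslam : (s.map φ).eval lam = 0 := by
        obtain ⟨t, ht⟩ := hfs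
        rw [ht, Polynomial.map_mul, Polynomial.eval_mul]
        have : (f.map φ).eval lam = 0 := by
          rwa [← Polynomial.eval₂_eq_eval_map, ← Polynomial.aeval_def]
        rw [this, zero_mul]
      -- multiplicity contradiction
      have hflam' : (f.map φ).eval lam = 0 := by
        rwa [← Polynomial.eval₂_eq_eval_map, ← Polynomial.aeval_def]
      have hfmap0 : f.map φ ≠ 0 := (hfmonic.map φ).ne_zero
      have hsmap0 : s.map φ ≠ 0 := (hsmonic.map φ).ne_zero
      have hmul : p.map φ = f.map φ * s.map φ := by rw [hs, Polynomial.map_mul]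
      have h2 : 2 ≤ rootMultiplicity lam (p.map φ) := by
        rw [hmul, Polynomial.rootMultiplicity_mul (mul_ne_zero hfmap0 hsmap0)]
        have hf1 : 0 < rootMultiplicity lam (f.map φ) :=
          (Polynomial.rootMultiplicity_pos hfmap0).2 hflam'
        have hs1 : 0 < rootMultiplicity lam (s.map φ) :=
          (Polynomial.rootMultiplicity_pos hsmap0).2 hslam
        omega
      omega
end
end

section
/- Let A and B be locally compact second-countable Hausdorff topological groups equipped with right-invariant Radon measures μ_A on A and μ_B on B, let S be a compact open subgroup of A, and let Γ be a discrete subgroup of A × B whose projection pr_B : Γ → B is injective. Let Γ_A := pr_A(Γ), let (a_i)_{i∈I} be a complete set of representatives of the double cosets S\A/Γ_A, and for each i set Γ_i := pr_B(Γ ∩ (a_i⁻¹ S a_i × B)). Choose for each i a Borel fundamental domain U_i for the right translation action of Γ_i on B. Then for every Borel fundamental domain D for the right translation action of Γ on A × B one has (μ_A × μ_B)(D) = μ_A(S) · Σ_{i∈I} μ_B(U_i) (an equality in [0, +∞]). -/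
open MeasureTheory

noncomputable section

/-- `D` is a Borel fundamental domain for the right translation action of `Λ` on `Y` with
respect to `μ`: `D` is Borel and `Y` is, up to `μ`-null sets, the disjoint union of the
translates `Dλ`, `λ ∈ Λ`. -/
def IsRightFundamentalDomain {Y : Type*} [Group Y] [MeasurableSpace Y]
    (Λ : Set Y) (μ : Measure Y) (D : Set Y) : Prop :=
  MeasurableSet D ∧
  μ (Set.univ \ ⋃ γ ∈ Λ, (fun x => x * γ) '' D) = 0 ∧
  Set.Pairwise Λ fun γ₁ γ₂ => μ (((fun x => x * γ₁) '' D) ∩ ((fun x => x * γ₂) '' D)) = 0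

section Aux
variable {Y : Type*} [Group Y] [MeasurableSpace Y] [MeasurableMul Y]
  (μ : Measure Y) [μ.IsMulRightInvariant]

lemma meas_image_mul_right (c : Y) (X : Set Y) : μ ((fun x => x * c) '' X) = μ X := by
  rw [Set.image_mul_right, measure_preimage_mul_right]

lemma measurableSet_image_mul_right (c : Y) {X : Set Y} (hX : MeasurableSet X) :
    MeasurableSet ((fun x => x * c) '' X) := by
  rw [Set.image_mul_right]
  exact (measurable_mul_const c⁻¹) hX

lemma inter_translate_meas (γ : Y) (D E : Set Y) :
    μ (D ∩ (fun x => x * γ) '' E) = μ ((fun x => x * γ⁻¹) '' D ∩ E) := by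
  have h : D ∩ (fun x => x * γ) '' E = (fun x => x * γ) '' ((fun x => x * γ⁻¹) '' D ∩ E) := by
    rw [Set.image_inter (mul_left_injective γ)]
    congr 1
    rw [Set.image_image]
    simp
  rw [h, meas_image_mul_right]

lemma IsRightFundamentalDomain.measure_eq' {Λ : Set Y} (hc : Λ.Countable)
    (hinv : ∀ γ ∈ Λ, γ⁻¹ ∈ Λ) {D E : Set Y}
    (hD : IsRightFundamentalDomain Λ μ D) (hE : IsRightFundamentalDomain Λ μ E) :
    μ D = μ E := by
  haveI := hc.to_subtype
  have key : ∀ D E : Set Y, IsRightFundamentalDomain Λ μ D →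
      IsRightFundamentalDomain Λ μ E →
      μ D = ∑' γ : Λ, μ (D ∩ (fun x => x * (γ : Y)) '' E) := by
    intro D E hD hE
    have hcov : μ (⋃ γ : Λ, (fun x => x * (γ : Y)) '' E)ᶜ = 0 := by
      have h2 := hE.2.1
      rw [← Set.compl_eq_univ_diff] at h2
      rw [Set.iUnion_subtype]
      exact h2
    rw [← measure_inter_conull hcov, Set.inter_iUnion, measure_iUnion₀]
    · intro γ₁ γ₂ hne
      have h0 := hE.2.2 γ₁.2 γ₂.2 (fun h => hne (Subtype.ext h))
      exact measure_mono_null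
        (Set.inter_subset_inter Set.inter_subset_right Set.inter_subset_right) h0
    · intro γ
      exact (hD.1.inter (measurableSet_image_mul_right _ hE.1)).nullMeasurableSet
  rw [key D E hD hE, key E D hE hD]
  let e : Λ ≃ Λ :=
    ⟨fun γ => ⟨(γ : Y)⁻¹, hinv _ γ.2⟩, fun γ => ⟨(γ : Y)⁻¹, hinv _ γ.2⟩,
     fun γ => by simp, fun γ => by simp⟩
  rw [← Equiv.tsum_eq e (fun γ : Λ => μ (E ∩ (fun x => x * (γ : Y)) '' D))]
  apply tsum_congr
  intro γ
  have he : ((e γ : Λ) : Y) = (γ : Y)⁻¹ := rfl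
  rw [he, inter_translate_meas, Set.inter_comm]

end Aux

lemma prod_translate {A B : Type*} [Group A] [Group B] (γ : A × B) (s : Set A) (t : Set B) :
    (fun x => x * γ) '' (s ×ˢ t) = ((fun x => x * γ.1) '' s) ×ˢ ((fun y => y * γ.2) '' t) := by
  ext ⟨x, y⟩
  simp only [Set.mem_image, Set.mem_prod, Prod.ext_iff]
  constructor
  · rintro ⟨⟨p, q⟩, ⟨hp, hq⟩, h1, h2⟩; exact ⟨⟨p, hp, h1⟩, ⟨q, hq, h2⟩⟩
  · rintro ⟨⟨p, hp, h1⟩, ⟨q, hq, h2⟩⟩; exact ⟨(p, q), ⟨hp, hq⟩, h1, h2⟩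


/-- Let `A`, `B` be locally compact second-countable Hausdorff topological
groups, with right-invariant Radon measures `μ_A`, `μ_B`, let `S` be a compact open subgroup of
`A` and `Γ` a discrete subgroup of `A × B` with injective projection to `B`. Let `(a_i)` be a
complete set of representatives of `S\A/Γ_A`, let `Γᵢ = pr_B(Γ ∩ (aᵢ⁻¹ S aᵢ × B))` with Borel
fundamental domain `Uᵢ` for its right translation action on `B`. Then every Borel fundamental
domain `D` of `Γ` acting by right translation on `A × B` satisfies
`(μ_A × μ_B)(D) = μ_A(S) · Σᵢ μ_B(Uᵢ)`. -/
theorem measure_fundamentalDomain_eq {A B : Type*}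
    [Group A] [TopologicalSpace A] [IsTopologicalGroup A] [LocallyCompactSpace A]
    [SecondCountableTopology A] [T2Space A] [MeasurableSpace A] [BorelSpace A]
    [Group B] [TopologicalSpace B] [IsTopologicalGroup B] [LocallyCompactSpace B]
    [SecondCountableTopology B] [T2Space B] [MeasurableSpace B] [BorelSpace B]
    (μA : Measure A) (μB : Measure B)
    [μA.IsMulRightInvariant] [μB.IsMulRightInvariant] [μA.Regular] [μB.Regular]
    (S : Subgroup A) (hSc : IsCompact (S : Set A)) (hSo : IsOpen (S : Set A))
    (Γ : Subgroup (A × B)) (hdisc : DiscreteTopology Γ)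
    (hinj : Set.InjOn Prod.snd (Γ : Set (A × B)))
    (I : Type*) (a : I → A)
    (hrep : ∀ x : A, ∃ i, ∃ s ∈ S, ∃ g ∈ Prod.fst '' (Γ : Set (A × B)), x = s * a i * g)
    (hrep' : ∀ i j : I,
      (∃ s ∈ S, ∃ g ∈ Prod.fst '' (Γ : Set (A × B)), a j = s * a i * g) → i = j)
    (U : I → Set B)
    (hU : ∀ i, IsRightFundamentalDomain
      {y : B | ∃ s ∈ S, ((a i)⁻¹ * s * a i, y) ∈ Γ} μB (U i))
    (D : Set (A × B))
    (hD : IsRightFundamentalDomain (Γ : Set (A × B)) (μA.prod μB) D) :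
    (μA.prod μB) D = μA (S : Set A) * ∑' i, μB (U i) := by
  classical
  set ΓI : I → Set B := fun i => {y : B | ∃ s ∈ S, ((a i)⁻¹ * s * a i, y) ∈ Γ} with hΓIdef
  set Sa : I → Set A := fun i => (fun x => x * a i) '' (S : Set A) with hSadef
  have hSaMeas : ∀ i, MeasurableSet (Sa i) :=
    fun i => measurableSet_image_mul_right _ hSo.measurableSet
  have hSaOpen : ∀ i, IsOpen (Sa i) := by
    intro i
    rw [hSadef]
    simp only
    rw [Set.image_mul_right]
    exact hSo.preimage (continuous_mul_right _)
  have hone : (1 : A) ∈ Prod.fst '' (Γ : Set (A × B)) := ⟨1, Γ.one_mem, rfl⟩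
  have hSadisj : ∀ i j, i ≠ j → Disjoint (Sa i) (Sa j) := by
    intro i j hij
    rw [Set.disjoint_left]
    rintro x ⟨s, hs, hsx⟩ ⟨t, ht, htx⟩
    dsimp only at hsx htx
    refine hij (hrep' i j ⟨t⁻¹ * s, mul_mem (inv_mem ht) hs, 1, hone, ?_⟩)
    have h1 : a j = t⁻¹ * (t * a j) := by group
    rw [htx, ← hsx] at h1
    rw [h1]; group
  haveI : Countable I := by
    rw [← Set.countable_univ_iff]
    exact Set.PairwiseDisjoint.countable_of_isOpen
      (fun i _ j _ hij => hSadisj i j hij)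
      (fun i _ => hSaOpen i)
      (fun i _ => ⟨a i, 1, S.one_mem, one_mul _⟩)
  have hΓc : (Γ : Set (A × B)).Countable := by
    rw [← Set.countable_coe_iff]
    obtain ⟨s, hsc, hsd⟩ := TopologicalSpace.exists_countable_dense Γ
    have huniv : s = Set.univ := by
      have h := hsd.closure_eq
      rwa [(isClosed_discrete s).closure_eq] at h
    rw [← Set.countable_univ_iff, ← huniv]
    exact hsc
  haveI := hΓc.to_subtype
  set F : Set (A × B) := ⋃ i, Sa i ×ˢ U i with hFdef
  have hFmeas : MeasurableSet F :=
    MeasurableSet.iUnion fun i => (hSaMeas i).prod (hU i).1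
  have h1ΓI : ∀ i, (1 : B) ∈ ΓI i := by
    intro i
    refine ⟨1, S.one_mem, ?_⟩
    have : ((a i)⁻¹ * 1 * a i, (1 : B)) = (1 : A × B) := by
      rw [Prod.ext_iff]; constructor
      · simp
      · rfl
    rw [this]; exact Γ.one_mem
  -- covering
  have hFcov : (μA.prod μB)
      (Set.univ \ ⋃ γ ∈ (Γ : Set (A × B)), (fun x => x * γ) '' F) = 0 := by
    set N : I → Set B := fun i =>
      Set.univ \ ⋃ δ ∈ ΓI i, (fun y => y * δ) '' U i with hNdef
    have hNnull : ∀ i, μB (N i) = 0 := fun i => (hU i).2.1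
    apply measure_mono_null (t := ⋃ i, ⋃ γ : (Γ : Set (A × B)),
      (Set.univ : Set A) ×ˢ ((fun y => y * (γ : A × B).2) '' N i))
    · rintro ⟨x, y⟩ ⟨-, hxy⟩
      obtain ⟨i, s, hs, g, ⟨γ₀, hγ₀, hg⟩, hx⟩ := hrep x
      simp only [Set.mem_iUnion]
      refine ⟨i, ⟨γ₀, hγ₀⟩, Set.mem_univ x, y * γ₀.2⁻¹, ⟨Set.mem_univ _, ?_⟩, by group⟩
      -- y * γ₀.2⁻¹ not covered by the U i translates
      intro hmem
      obtain ⟨δ, ⟨s', hs', hγ₁⟩, u, hu, huδ⟩ := Set.mem_iUnion₂.1 hmem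
      apply hxy
      refine Set.mem_iUnion₂.2 ⟨((a i)⁻¹ * s' * a i, δ) * γ₀,
        Γ.mul_mem hγ₁ hγ₀, (s * s'⁻¹ * a i, u), ?_, ?_⟩
      · exact Set.mem_iUnion.2 ⟨i, ⟨s * s'⁻¹, mul_mem hs (inv_mem hs'), rfl⟩, hu⟩
      · rw [Prod.ext_iff]
        constructor
        · show s * s'⁻¹ * a i * ((a i)⁻¹ * s' * a i * γ₀.1) = x
          rw [hx, ← hg]; group
        · show u * (δ * γ₀.2) = y
          have : u * δ = y * γ₀.2⁻¹ := huδ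
          rw [← mul_assoc, this]; group
    · apply measure_iUnion_null
      intro i
      apply measure_iUnion_null
      intro γ
      rw [Measure.prod_prod, meas_image_mul_right, hNnull i, mul_zero]
  -- pairwise a.e. disjoint
  have hFpair : Set.Pairwise (Γ : Set (A × B)) fun γ₁ γ₂ =>
      (μA.prod μB) ((fun x => x * γ₁) '' F ∩ (fun x => x * γ₂) '' F) = 0 := by
    intro γ₁ hγ₁ γ₂ hγ₂ hne
    have hexp : ∀ γ : A × B, (fun x => x * γ) '' F =
        ⋃ i, ((fun x => x * γ.1) '' Sa i) ×ˢ ((fun y => y * γ.2) '' U i) := by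
      intro γ
      rw [hFdef, Set.image_iUnion]
      exact Set.iUnion_congr fun i => prod_translate γ (Sa i) (U i)
    rw [hexp γ₁, hexp γ₂]
    apply measure_mono_null (t := ⋃ i, ⋃ j,
      (((fun x => x * γ₁.1) '' Sa i) ×ˢ ((fun y => y * γ₁.2) '' U i)) ∩
      (((fun x => x * γ₂.1) '' Sa j) ×ˢ ((fun y => y * γ₂.2) '' U j)))
    · rintro p ⟨hp1, hp2⟩
      obtain ⟨i, hi⟩ := Set.mem_iUnion.1 hp1
      obtain ⟨j, hj⟩ := Set.mem_iUnion.1 hp2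
      exact Set.mem_iUnion.2 ⟨i, Set.mem_iUnion.2 ⟨j, hi, hj⟩⟩
    apply measure_iUnion_null; intro i
    apply measure_iUnion_null; intro j
    rw [Set.prod_inter_prod, Measure.prod_prod]
    rcases Set.eq_empty_or_nonempty
      (((fun x => x * γ₁.1) '' Sa i) ∩ ((fun x => x * γ₂.1) '' Sa j)) with hAe | ⟨x, hxi, hxj⟩
    · rw [hAe, measure_empty, zero_mul]
    obtain ⟨x1, ⟨s, hs, hsx⟩, hx1⟩ := hxi
    obtain ⟨x2, ⟨t, ht, htx⟩, hx2⟩ := hxj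
    -- x = s * a i * γ₁.1 = t * a j * γ₂.1
    dsimp only at hx1 hx2 hsx htx
    have hE : s * a i * γ₁.1 = t * a j * γ₂.1 := by
      rw [hsx, htx, hx1, hx2]
    have hij : i = j := by
      refine hrep' i j ⟨t⁻¹ * s, mul_mem (inv_mem ht) hs, γ₁.1 * γ₂.1⁻¹,
        ⟨γ₁ * γ₂⁻¹, Γ.mul_mem hγ₁ (Γ.inv_mem hγ₂), rfl⟩, ?_⟩
      have h1 : a j = t⁻¹ * (t * a j * γ₂.1) * γ₂.1⁻¹ := by group
      rw [← hE] at h1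
      rw [h1]; group
    subst hij
    -- now derive δ ∈ ΓI i
    have hfst : γ₁.1 * γ₂.1⁻¹ = (a i)⁻¹ * (s⁻¹ * t) * a i := by
      have h1 : γ₁.1 * γ₂.1⁻¹ = (s * a i)⁻¹ * (s * a i * γ₁.1) * γ₂.1⁻¹ := by group
      rw [hE] at h1
      rw [h1]; group
    have hmemΓ : ((a i)⁻¹ * (s⁻¹ * t) * a i, γ₁.2 * γ₂.2⁻¹) ∈ Γ := by
      have heq : ((a i)⁻¹ * (s⁻¹ * t) * a i, γ₁.2 * γ₂.2⁻¹) = γ₁ * γ₂⁻¹ := by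
        rw [Prod.ext_iff]
        exact ⟨hfst.symm, rfl⟩
      rw [heq]
      exact Γ.mul_mem hγ₁ (Γ.inv_mem hγ₂)
    have hδΓI : γ₁.2 * γ₂.2⁻¹ ∈ ΓI i := ⟨s⁻¹ * t, mul_mem (inv_mem hs) ht, hmemΓ⟩
    have hδne : γ₁.2 * γ₂.2⁻¹ ≠ 1 := by
      intro h
      have h2 : γ₁.2 = γ₂.2 := by rwa [mul_inv_eq_one] at h
      exact hne (hinj hγ₁ hγ₂ h2)
    have hUnull := (hU i).2.2 hδΓI (h1ΓI i) hδne
    have hB : μB (((fun y => y * γ₁.2) '' U i) ∩ ((fun y => y * γ₂.2) '' U i)) = 0 := by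
      rw [inter_translate_meas]
      have himg : (fun y => y * γ₂.2⁻¹) '' ((fun y => y * γ₁.2) '' U i) =
          (fun y => y * (γ₁.2 * γ₂.2⁻¹)) '' U i := by
        rw [Set.image_image]
        simp [mul_assoc]
      rw [himg]
      dsimp only at hUnull
      have h1 : (fun y => y * (1 : B)) '' U i = U i := by simp
      rw [h1] at hUnull
      exact hUnull
    rw [hB, mul_zero]
  have hF : IsRightFundamentalDomain (Γ : Set (A × B)) (μA.prod μB) F :=
    ⟨hFmeas, hFcov, hFpair⟩
  have h1 : (μA.prod μB) D = (μA.prod μB) F :=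
    IsRightFundamentalDomain.measure_eq' _ hΓc (fun γ hγ => Γ.inv_mem hγ) hD hF
  have h2 : (μA.prod μB) F = μA (S : Set A) * ∑' i, μB (U i) := by
    have hpdisj : Pairwise (Function.onFun Disjoint fun i => Sa i ×ˢ U i) := by
      intro i j hij
      rw [Function.onFun, Set.disjoint_left]
      rintro ⟨x, y⟩ ⟨hx1, -⟩ ⟨hx2, -⟩
      exact Set.disjoint_left.1 (hSadisj i j hij) hx1 hx2
    rw [hFdef, measure_iUnion hpdisj fun i => (hSaMeas i).prod (hU i).1]
    rw [← ENNReal.tsum_mul_left]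
    apply tsum_congr
    intro i
    rw [Measure.prod_prod, meas_image_mul_right]
  rw [h1, h2]
end
end
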